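/- Helffer–Sjöstrand representation formula: for all Y, Y' ∈ L²(Ω), Cov[Y, Y'] = Σ_j E[(D_j Y) T(D_j Y')], where T is the pseudo-inverse of the Glauber Laplacian. -/

import Mathlib

open MeasureTheory ProbabilityTheory Finset

noncomputable section

variable {ι : Type} [Fintype ι] [DecidableEq ι]
  {Z : ι → Type} [∀ i, MeasurableSpace (Z i)]

/-- The Glauber derivative `D_j Y := Y - E_j[Y]`. -/
def glauberD (μ : ∀ i, Measure (Z i)) (j : ι) (Y : (∀ i, Z i) → ℝ) : (∀ i, Z i) → ℝ :=
  fun ω => Y ω - ∫ z, Y (Function.update ω j z) ∂(μ j)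

/-- Partial expectation `E_T` integrating out the variables with index in `T`. -/
def partialE (μ : ∀ i, Measure (Z i)) [∀ i, IsProbabilityMeasure (μ i)] (T : Finset ι)
    (Y : (∀ i, Z i) → ℝ) : (∀ i, Z i) → ℝ :=
  fun ω => ∫ ζ : (∀ j : T, Z j),
    Y (fun i => if h : i ∈ T then ζ ⟨i, h⟩ else ω i) ∂(Measure.pi fun j : T => μ j)

/-- The operator `(∏_{j∈J} D_j)(∏_{j∉J} E_j) = ∑_{S ⊆ J} (-1)^{|S|} E_{S ∪ Jᶜ}`. -/
def glauberPiJ (μ : ∀ i, Measure (Z i)) [∀ i, IsProbabilityMeasure (μ i)] (J : Finset ι)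
    (Y : (∀ i, Z i) → ℝ) : (∀ i, Z i) → ℝ :=
  fun ω => ∑ S ∈ J.powerset, (-1 : ℝ) ^ S.card * partialE μ (S ∪ Jᶜ) Y ω

/-- The projection `π_n` onto the `n`-th Glauber chaos. -/
def glauberPi (μ : ∀ i, Measure (Z i)) [∀ i, IsProbabilityMeasure (μ i)] (n : ℕ)
    (Y : (∀ i, Z i) → ℝ) : (∀ i, Z i) → ℝ :=
  fun ω => ∑ J ∈ Finset.univ.powerset.filter (fun J : Finset ι => J.card = n),
    glauberPiJ μ J Y ω

/-- The pseudo-inverse `T := ∑_{n ≥ 1} (1/n) π_n` of the Glauber Laplacian. -/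
def glauberT (μ : ∀ i, Measure (Z i)) [∀ i, IsProbabilityMeasure (μ i)]
    (Y : (∀ i, Z i) → ℝ) : (∀ i, Z i) → ℝ :=
  fun ω => ∑ n ∈ Finset.Icc 1 (Fintype.card ι), (n : ℝ)⁻¹ * glauberPi μ n Y ω


/-! ### Auxiliary infrastructure -/

set_option linter.unusedSectionVars false in
/-- Merge two configurations: take `b` on `S` and `a` off `S`. -/
def fmerge (S : Finset ι) (a b : ∀ i, Z i) : ∀ i, Z i := fun i => if i ∈ S then b i else a i

set_option linter.unusedSectionVars false in
lemma measurable_fmerge (S : Finset ι) :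
    Measurable (fun p : (∀ i, Z i) × (∀ i, Z i) => fmerge S p.1 p.2) := by
  apply measurable_pi_lambda
  intro i
  by_cases h : i ∈ S <;> simp only [fmerge, h, if_true, if_false]
  · exact (measurable_pi_apply i).comp measurable_snd
  · exact (measurable_pi_apply i).comp measurable_fst

set_option linter.unusedSectionVars false in
lemma measurable_fmerge_right (S : Finset ι) (a : ∀ i, Z i) :
    Measurable (fun b => fmerge (Z := Z) S a b) :=
  (measurable_fmerge S).comp (measurable_const.prodMk measurable_id)

lemma integrable_bdd {α : Type*} [MeasurableSpace α] {ν : Measure α} [IsFiniteMeasure ν]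
    {f : α → ℝ} (hf : AEStronglyMeasurable f ν) (M : ℝ) (hb : ∀ x, |f x| ≤ M) :
    Integrable f ν :=
  (integrable_const M).mono' hf (Filter.Eventually.of_forall fun x => by
    simpa [Real.norm_eq_abs] using hb x)

lemma bdd_mul {α : Type*} {f g : α → ℝ} {Mf Mg : ℝ} (hf : ∀ x, |f x| ≤ Mf)
    (hg : ∀ x, |g x| ≤ Mg) : ∀ x, |f x * g x| ≤ Mf * Mg := fun x => by
  rw [abs_mul]
  exact mul_le_mul (hf x) (hg x) (abs_nonneg _) (le_trans (abs_nonneg _) (hf x))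

section PE

set_option linter.unusedSectionVars false

variable (μ : ∀ i, Measure (Z i)) [∀ i, IsProbabilityMeasure (μ i)]

lemma map_fmerge (S : Finset ι) :
    ((Measure.pi μ).prod (Measure.pi μ)).map (fun p => fmerge S p.1 p.2) = Measure.pi μ := by
  refine (Measure.pi_eq fun s hs => ?_).symm
  rw [Measure.map_apply (measurable_fmerge S) (MeasurableSet.univ_pi hs)]
  have hpre : (fun p : (∀ i, Z i) × (∀ i, Z i) => fmerge S p.1 p.2) ⁻¹' (Set.pi Set.univ s)
      = (Set.pi Set.univ fun i => if i ∈ S then Set.univ else s i) ×ˢ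
        (Set.pi Set.univ fun i => if i ∈ S then s i else Set.univ) := by
    ext p
    simp only [Set.mem_preimage, Set.mem_pi, Set.mem_univ, forall_true_left, Set.mem_prod]
    constructor
    · intro h
      constructor <;> intro i <;> by_cases hi : i ∈ S <;>
        simp only [hi, if_true, if_false, Set.mem_univ] <;>
        simpa [fmerge, hi] using h i
    · rintro ⟨h1, h2⟩ i
      by_cases hi : i ∈ S
      · have := h2 i; simpa [fmerge, hi] using this
      · have := h1 i; simpa [fmerge, hi] using this
  rw [hpre, Measure.prod_prod, Measure.pi_pi, Measure.pi_pi, ← Finset.prod_mul_distrib]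
  refine Finset.prod_congr rfl fun i _ => ?_
  by_cases hi : i ∈ S <;> simp [hi]

lemma integral_fmerge (S : Finset ι) {f : (∀ i, Z i) → ℝ} (hf : Measurable f) :
    ∫ p, f (fmerge S p.1 p.2) ∂((Measure.pi μ).prod (Measure.pi μ))
      = ∫ ω, f ω ∂(Measure.pi μ) := by
  conv_rhs => rw [← map_fmerge μ S]
  rw [integral_map (measurable_fmerge S).aemeasurable hf.aestronglyMeasurable]

/-- Partial expectation as resampling the coordinates in `S` from the full product measure. -/
def pE (S : Finset ι) (f : (∀ i, Z i) → ℝ) : (∀ i, Z i) → ℝ :=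
  fun ω => ∫ ω', f (fmerge S ω ω') ∂(Measure.pi μ)

lemma measurable_pE (S : Finset ι) {f : (∀ i, Z i) → ℝ} (hf : Measurable f) :
    Measurable (pE μ S f) :=
  (((hf.comp (measurable_fmerge S)).stronglyMeasurable).integral_prod_right').measurable

lemma pE_bound (S : Finset ι) {f : (∀ i, Z i) → ℝ} {M : ℝ} (hb : ∀ ω, |f ω| ≤ M) :
    ∀ ω, |pE μ S f ω| ≤ M := by
  intro ω
  rw [← Real.norm_eq_abs]
  calc ‖pE μ S f ω‖ ≤ ∫ ω', ‖f (fmerge S ω ω')‖ ∂(Measure.pi μ) :=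
        norm_integral_le_integral_norm _
    _ ≤ ∫ _ω', M ∂(Measure.pi μ) := by
        apply integral_mono_of_nonneg (Filter.Eventually.of_forall fun ω' => norm_nonneg _)
          (integrable_const M)
        exact Filter.Eventually.of_forall fun ω' => by
          simpa [Real.norm_eq_abs] using hb (fmerge S ω ω')
    _ = M := by simp

lemma pE_congr (S : Finset ι) {f g : (∀ i, Z i) → ℝ} (h : ∀ ω, f ω = g ω) (ω : ∀ i, Z i) :
    pE μ S f ω = pE μ S g ω := by
  unfold pE; simp_rw [h]

lemma fmerge_fmerge (S T : Finset ι) (ω ω' ω'' : ∀ i, Z i) :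
    fmerge S (fmerge T ω ω') ω'' = fmerge (S ∪ T) ω (fmerge S ω' ω'') := by
  funext i
  by_cases h1 : i ∈ S <;> by_cases h2 : i ∈ T <;> simp [fmerge, h1, h2]

lemma pE_comp (S T : Finset ι) {f : (∀ i, Z i) → ℝ} (hf : Measurable f) {M : ℝ}
    (hb : ∀ ω, |f ω| ≤ M) (ω : ∀ i, Z i) :
    pE μ T (pE μ S f) ω = pE μ (S ∪ T) f ω := by
  have hint : Integrable (fun p : (∀ i, Z i) × (∀ i, Z i) =>
      f (fmerge (S ∪ T) ω (fmerge S p.1 p.2))) ((Measure.pi μ).prod (Measure.pi μ)) := by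
    refine integrable_bdd ?_ M (fun p => hb _)
    exact ((hf.comp (measurable_fmerge_right (S ∪ T) ω)).comp
      (measurable_fmerge S)).aestronglyMeasurable
  calc pE μ T (pE μ S f) ω
      = ∫ ω', ∫ ω'', f (fmerge (S ∪ T) ω (fmerge S ω' ω'')) ∂(Measure.pi μ) ∂(Measure.pi μ) := by
        unfold pE; simp_rw [fmerge_fmerge]
    _ = ∫ p : (∀ i, Z i) × (∀ i, Z i), f (fmerge (S ∪ T) ω (fmerge S p.1 p.2))
          ∂((Measure.pi μ).prod (Measure.pi μ)) := (integral_prod _ hint).symm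
    _ = pE μ (S ∪ T) f ω :=
        integral_fmerge μ S (hf.comp (measurable_fmerge_right (S ∪ T) ω))

lemma fmerge_self_right (S : Finset ι) (ω ω' ω'' : ∀ i, Z i) :
    fmerge S (fmerge S ω ω') ω'' = fmerge S ω ω'' := by
  funext i; by_cases h : i ∈ S <;> simp [fmerge, h]

lemma pE_mul (S : Finset ι) {f g : (∀ i, Z i) → ℝ} (hf : Measurable f) {Mf : ℝ}
    (hbf : ∀ ω, |f ω| ≤ Mf) (hg : Measurable g) {Mg : ℝ} (hbg : ∀ ω, |g ω| ≤ Mg) :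
    ∫ ω, pE μ S f ω * g ω ∂(Measure.pi μ)
      = ∫ ω, pE μ S f ω * pE μ S g ω ∂(Measure.pi μ) := by
  have hkey : ∀ ω ω' : ∀ i, Z i, pE μ S f (fmerge S ω ω') = pE μ S f ω := by
    intro ω ω'; unfold pE; simp_rw [fmerge_self_right]
  have hm : Measurable (fun ω => pE μ S f ω * g ω) := (measurable_pE μ S hf).mul hg
  have hint : Integrable (fun p : (∀ i, Z i) × (∀ i, Z i) =>
      pE μ S f p.1 * g (fmerge S p.1 p.2)) ((Measure.pi μ).prod (Measure.pi μ)) := by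
    refine integrable_bdd ?_ (Mf * Mg) (fun p => ?_)
    · exact (((measurable_pE μ S hf).comp measurable_fst).mul
        (hg.comp (measurable_fmerge S))).aestronglyMeasurable
    · rw [abs_mul]
      have h1 := pE_bound μ S hbf p.1
      have h2 := hbg (fmerge S p.1 p.2)
      have h0f : (0:ℝ) ≤ Mf := le_trans (abs_nonneg _) h1
      exact mul_le_mul h1 h2 (abs_nonneg _) h0f
  calc ∫ ω, pE μ S f ω * g ω ∂(Measure.pi μ)
      = ∫ p : (∀ i, Z i) × (∀ i, Z i), pE μ S f (fmerge S p.1 p.2) * g (fmerge S p.1 p.2)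
          ∂((Measure.pi μ).prod (Measure.pi μ)) := (integral_fmerge μ S hm).symm
    _ = ∫ p : (∀ i, Z i) × (∀ i, Z i), pE μ S f p.1 * g (fmerge S p.1 p.2)
          ∂((Measure.pi μ).prod (Measure.pi μ)) := by simp_rw [hkey]
    _ = ∫ ω, ∫ ω', pE μ S f ω * g (fmerge S ω ω') ∂(Measure.pi μ) ∂(Measure.pi μ) :=
        integral_prod _ hint
    _ = ∫ ω, pE μ S f ω * pE μ S g ω ∂(Measure.pi μ) := by
        congr 1; funext ω
        rw [integral_const_mul]
        rfl

lemma pE_selfadj (S : Finset ι) {f g : (∀ i, Z i) → ℝ} (hf : Measurable f) {Mf : ℝ}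
    (hbf : ∀ ω, |f ω| ≤ Mf) (hg : Measurable g) {Mg : ℝ} (hbg : ∀ ω, |g ω| ≤ Mg) :
    ∫ ω, pE μ S f ω * g ω ∂(Measure.pi μ) = ∫ ω, f ω * pE μ S g ω ∂(Measure.pi μ) := by
  rw [pE_mul μ S hf hbf hg hbg]
  have := pE_mul μ S hg hbg hf hbf
  simp_rw [mul_comm] at this ⊢
  exact this.symm

lemma pE_empty {f : (∀ i, Z i) → ℝ} (ω : ∀ i, Z i) : pE μ ∅ f ω = f ω := by
  unfold pE
  have h : ∀ ω' : ∀ i, Z i, fmerge (∅ : Finset ι) ω ω' = ω := by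
    intro ω'; funext i; simp [fmerge]
  simp_rw [h]
  simp

lemma pE_univ {f : (∀ i, Z i) → ℝ} (ω : ∀ i, Z i) :
    pE μ (univ : Finset ι) f ω = ∫ ω', f ω' ∂(Measure.pi μ) := by
  unfold pE
  have h : ∀ ω' : ∀ i, Z i, fmerge (univ : Finset ι) ω ω' = ω' := by
    intro ω'; funext i; simp [fmerge]
  simp_rw [h]

lemma pE_sub (S : Finset ι) {f g : (∀ i, Z i) → ℝ} (hf : Measurable f) {Mf : ℝ}
    (hbf : ∀ ω, |f ω| ≤ Mf) (hg : Measurable g) {Mg : ℝ} (hbg : ∀ ω, |g ω| ≤ Mg)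
    (ω : ∀ i, Z i) :
    pE μ S (fun ω => f ω - g ω) ω = pE μ S f ω - pE μ S g ω := by
  unfold pE
  exact integral_sub
    (integrable_bdd (hf.comp (measurable_fmerge_right S ω)).aestronglyMeasurable Mf fun x => hbf _)
    (integrable_bdd (hg.comp (measurable_fmerge_right S ω)).aestronglyMeasurable Mg fun x => hbg _)

lemma pE_sum (S : Finset ι) {κ : Type*} (s : Finset κ) (F : κ → (∀ i, Z i) → ℝ)
    (hm : ∀ k ∈ s, Measurable (F k)) (hb : ∀ k ∈ s, ∃ M, ∀ ω, |F k ω| ≤ M) (ω : ∀ i, Z i) :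
    pE μ S (fun ω => ∑ k ∈ s, F k ω) ω = ∑ k ∈ s, pE μ S (F k) ω := by
  unfold pE
  exact integral_finset_sum s fun k hk => by
    obtain ⟨M, hM⟩ := hb k hk
    exact integrable_bdd ((hm k hk).comp
      (measurable_fmerge_right S ω)).aestronglyMeasurable M fun x => hM _

lemma pE_const_mul (S : Finset ι) (c : ℝ) (f : (∀ i, Z i) → ℝ) (ω : ∀ i, Z i) :
    pE μ S (fun ω => c * f ω) ω = c * pE μ S f ω := by
  unfold pE
  exact integral_const_mul c _

lemma map_restrict (T : Finset ι) :
    (Measure.pi μ).map (fun (ω : ∀ i, Z i) (j : T) => ω j)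
      = Measure.pi (fun j : T => μ j) := by
  have h := measurePreserving_piEquivPiSubtypeProd μ (fun i => i ∈ T)
  have heq : (fun (ω : ∀ i, Z i) (j : T) => ω j)
      = Prod.fst ∘ (MeasurableEquiv.piEquivPiSubtypeProd Z (fun i => i ∈ T)) := rfl
  rw [heq, ← Measure.map_map measurable_fst
    (MeasurableEquiv.piEquivPiSubtypeProd Z (fun i => i ∈ T)).measurable, h.map_eq,
    Measure.map_fst_prod]
  simp only [measure_univ, one_smul]
  congr!

lemma partialE_eq (T : Finset ι) {f : (∀ i, Z i) → ℝ} (hf : Measurable f) (ω : ∀ i, Z i) :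
    partialE μ T f ω = pE μ T f ω := by
  unfold partialE pE
  have hr : Measurable (fun (ω : ∀ i, Z i) (j : T) => ω j) :=
    measurable_pi_lambda _ fun j => measurable_pi_apply _
  have hg : Measurable (fun ζ : ∀ j : T, Z j =>
      f (fun i => if h : i ∈ T then ζ ⟨i, h⟩ else ω i)) := by
    apply hf.comp
    apply measurable_pi_lambda
    intro i
    by_cases h : i ∈ T
    · simpa only [dif_pos h] using measurable_pi_apply (⟨i, h⟩ : { x // x ∈ T })
    · simpa only [dif_neg h] using measurable_const
  have hsm : AEStronglyMeasurable (fun ζ : ∀ j : T, Z j =>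
      f (fun i => if h : i ∈ T then ζ ⟨i, h⟩ else ω i))
      ((Measure.pi μ).map (fun (ω : ∀ i, Z i) (j : T) => ω j)) := by
    rw [map_restrict μ T]; exact hg.aestronglyMeasurable
  rw [← map_restrict μ T, integral_map hr.aemeasurable hsm]
  congr 1

lemma map_eval (j : ι) : (Measure.pi μ).map (fun ω => ω j) = μ j := by
  refine Measure.ext fun s hs => ?_
  rw [Measure.map_apply (measurable_pi_apply j) hs]
  have hpre : (fun ω : ∀ i, Z i => ω j) ⁻¹' s
      = Set.pi Set.univ (Function.update (fun i => (Set.univ : Set (Z i))) j s) := by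
    ext ω
    simp only [Set.mem_preimage, Set.mem_pi, Set.mem_univ, forall_true_left]
    constructor
    · intro h i
      rcases eq_or_ne i j with rfl | hne
      · simpa using h
      · simp [Function.update_of_ne hne]
    · intro h
      simpa using h j
  rw [hpre, Measure.pi_pi]
  rw [Fintype.prod_eq_single j (fun i hi => by simp [Function.update_of_ne hi])]
  simp

lemma glauberD_eq (j : ι) {f : (∀ i, Z i) → ℝ} (hf : Measurable f) :
    glauberD μ j f = fun ω => f ω - pE μ ({j} : Finset ι) f ω := by
  funext ω
  unfold glauberD pE
  congr 1
  have hsm : AEStronglyMeasurable (fun z => f (Function.update ω j z))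
      ((Measure.pi μ).map (fun ω' : ∀ i, Z i => ω' j)) := by
    rw [map_eval μ j]
    exact (hf.comp (measurable_update ω)).aestronglyMeasurable
  rw [← map_eval μ j, integral_map (measurable_pi_apply j).aemeasurable hsm]
  congr 1
  funext ω'
  congr 1
  funext i
  rcases eq_or_ne i j with rfl | h
  · simp [fmerge]
  · simp [fmerge, h, Function.update_of_ne h]

end PE

/-! ### Combinatorial lemmas -/

set_option linter.unusedSectionVars false in
lemma comb_insert {J : Finset ι} {j : ι} (hj : j ∈ J) (h : Finset ι → ℝ) :
    ∑ S ∈ J.powerset, (-1 : ℝ) ^ S.card * h (insert j (S ∪ Jᶜ)) = 0 := by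
  obtain ⟨J', hj', rfl⟩ : ∃ J', j ∉ J' ∧ insert j J' = J :=
    ⟨J.erase j, notMem_erase j J, insert_erase hj⟩
  rw [Finset.sum_powerset_insert hj', ← Finset.sum_add_distrib]
  apply Finset.sum_eq_zero
  intro S hS
  have hjS : j ∉ S := fun hc => hj' (Finset.mem_powerset.1 hS hc)
  rw [Finset.card_insert_of_notMem hjS]
  have h1 : insert j (insert j S ∪ (insert j J')ᶜ) = insert j (S ∪ (insert j J')ᶜ) := by
    rw [Finset.insert_union, Finset.insert_idem]
  rw [h1, pow_succ]
  ring

set_option linter.unusedSectionVars false in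
set_option linter.unnecessarySeqFocus false in
lemma comb_resolution (h : Finset ι → ℝ) :
    ∑ J ∈ (univ : Finset ι).powerset, ∑ S ∈ J.powerset, (-1 : ℝ) ^ S.card * h (S ∪ Jᶜ)
      = h ∅ := by
  rw [Finset.sum_sigma']
  have step : ∑ p ∈ (univ : Finset ι).powerset.sigma (fun J => J.powerset),
        (-1 : ℝ) ^ p.2.card * h (p.2 ∪ p.1ᶜ)
      = ∑ p ∈ (univ : Finset ι).powerset.sigma (fun U => U.powerset),
        (-1 : ℝ) ^ p.2.card * h p.1 := by
    refine Finset.sum_nbij' (fun p => ⟨p.2 ∪ p.1ᶜ, p.2⟩) (fun p => ⟨(p.1 \ p.2)ᶜ, p.2⟩)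
      ?_ ?_ ?_ ?_ ?_
    · rintro ⟨J, S⟩ hp
      simp only [Finset.mem_sigma, Finset.mem_powerset] at hp ⊢
      exact ⟨Finset.subset_univ _, Finset.subset_union_left⟩
    · rintro ⟨U, S⟩ hp
      simp only [Finset.mem_sigma, Finset.mem_powerset] at hp ⊢
      refine ⟨Finset.subset_univ _, ?_⟩
      intro x hx
      simp only [Finset.mem_compl, Finset.mem_sdiff, not_and, not_not]
      intro _
      exact hx
    · rintro ⟨J, S⟩ hp
      simp only [Finset.mem_sigma, Finset.mem_powerset] at hp
      obtain ⟨-, hSJ⟩ := hp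
      have heq : ((S ∪ Jᶜ) \ S)ᶜ = J := by
        ext x
        have hx : x ∈ S → x ∈ J := fun hxs => hSJ hxs
        simp only [Finset.mem_compl, Finset.mem_sdiff, Finset.mem_union, not_and, not_not]
        by_cases h1 : x ∈ S <;> by_cases h2 : x ∈ J <;> simp [h1, h2] <;> tauto
      simp only [heq]
    · rintro ⟨U, S⟩ hp
      simp only [Finset.mem_sigma, Finset.mem_powerset] at hp
      obtain ⟨-, hSU⟩ := hp
      have heq : S ∪ ((U \ S)ᶜ)ᶜ = U := by
        rw [compl_compl, Finset.union_sdiff_of_subset hSU]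
      simp only [heq]
    · rintro ⟨J, S⟩ _
      rfl
  rw [step, Finset.sum_sigma]
  have inner : ∀ U ∈ (univ : Finset ι).powerset,
      ∑ S ∈ U.powerset, (-1 : ℝ) ^ S.card * h U = (if U = ∅ then 1 else 0) * h U := by
    intro U _
    rw [← Finset.sum_mul]
    congr 1
    have hz := @Finset.sum_powerset_neg_one_pow_card ι _ U
    calc ∑ S ∈ U.powerset, (-1 : ℝ) ^ S.card
        = ((∑ S ∈ U.powerset, (-1 : ℤ) ^ S.card : ℤ) : ℝ) := by push_cast; rfl
      _ = _ := by rw [hz]; split <;> simp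
  rw [Finset.sum_congr rfl inner]
  simp only [ite_mul, one_mul, zero_mul]
  rw [Finset.sum_ite_eq' Finset.univ.powerset (∅ : Finset ι) h]
  simp



section HSP

set_option linter.unusedSectionVars false

variable (μ : ∀ i, Measure (Z i)) [∀ i, IsProbabilityMeasure (μ i)]
  {Y' : (∀ i, Z i) → ℝ} (hY' : Measurable Y') {M' : ℝ} (hM'b : ∀ ω, |Y' ω| ≤ M')

/-- The rewritten chaos projection `π_J` applied to `Y'`. -/
def hsP (J : Finset ι) : (∀ i, Z i) → ℝ :=
  fun ω => ∑ S ∈ J.powerset, (-1 : ℝ) ^ S.card * pE μ (S ∪ Jᶜ) Y' ω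

include hY' in
lemma hsP_measurable (J : Finset ι) : Measurable (hsP μ (Y' := Y') J) :=
  Finset.measurable_sum _ fun S _ => measurable_const.mul (measurable_pE μ _ hY')

include hM'b in
lemma hsP_bound (J : Finset ι) : ∀ ω, |hsP μ (Y' := Y') J ω| ≤ (J.powerset.card : ℝ) * M' := by
  intro ω
  calc |hsP μ (Y' := Y') J ω|
      ≤ ∑ S ∈ J.powerset, |(-1 : ℝ) ^ S.card * pE μ (S ∪ Jᶜ) Y' ω| :=
        Finset.abs_sum_le_sum_abs _ _
    _ ≤ ∑ _S ∈ J.powerset, M' := by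
        refine Finset.sum_le_sum fun S _ => ?_
        rw [abs_mul, abs_pow, abs_neg, abs_one, one_pow, one_mul]
        exact pE_bound μ _ hM'b ω
    _ = (J.powerset.card : ℝ) * M' := by rw [Finset.sum_const, nsmul_eq_mul]

include hY' hM'b in
lemma pE_hsP (J : Finset ι) {j : ι} (hj : j ∈ J) (ω : ∀ i, Z i) :
    pE μ ({j} : Finset ι) (hsP μ (Y' := Y') J) ω = 0 := by
  have hPdef : hsP μ (Y' := Y') J
      = fun ω => ∑ S ∈ J.powerset, (-1 : ℝ) ^ S.card * pE μ (S ∪ Jᶜ) Y' ω := rfl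
  rw [hPdef, pE_sum μ {j} J.powerset (fun S ω => (-1 : ℝ) ^ S.card * pE μ (S ∪ Jᶜ) Y' ω)
    (fun S _ => measurable_const.mul (measurable_pE μ _ hY'))
    (fun S _ => ⟨M', fun ω' => by
      rw [abs_mul, abs_pow, abs_neg, abs_one, one_pow, one_mul]
      exact pE_bound μ _ hM'b ω'⟩) ω]
  have hterm : ∀ S ∈ J.powerset,
      pE μ ({j} : Finset ι) (fun ω => (-1 : ℝ) ^ S.card * pE μ (S ∪ Jᶜ) Y' ω) ω
        = (-1 : ℝ) ^ S.card * pE μ (insert j (S ∪ Jᶜ)) Y' ω := by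
    intro S _
    rw [pE_const_mul, pE_comp μ (S ∪ Jᶜ) {j} hY' hM'b ω]
    congr 2
    rw [Finset.union_comm, ← Finset.insert_eq]
  rw [Finset.sum_congr rfl hterm]
  exact comb_insert hj (fun U => pE μ U Y' ω)

lemma sum_hsP (ω : ∀ i, Z i) :
    ∑ J ∈ (univ : Finset ι).powerset, hsP μ (Y' := Y') J ω = Y' ω := by
  have h := comb_resolution (fun U => pE μ U Y' ω)
  calc ∑ J ∈ (univ : Finset ι).powerset, hsP μ (Y' := Y') J ω
      = ∑ J ∈ (univ : Finset ι).powerset, ∑ S ∈ J.powerset,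
          (-1 : ℝ) ^ S.card * pE μ (S ∪ Jᶜ) Y' ω := rfl
    _ = pE μ ∅ Y' ω := h
    _ = Y' ω := pE_empty μ ω

lemma hsP_empty (ω : ∀ i, Z i) :
    hsP μ (Y' := Y') (∅ : Finset ι) ω = ∫ ω', Y' ω' ∂(Measure.pi μ) := by
  have : hsP μ (Y' := Y') (∅ : Finset ι) ω
      = ∑ S ∈ (∅ : Finset ι).powerset, (-1 : ℝ) ^ S.card * pE μ (S ∪ (∅ : Finset ι)ᶜ) Y' ω := rfl
  rw [this, Finset.powerset_empty, Finset.sum_singleton]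
  simp [pE_univ μ ω]

end HSP

/-- **Helffer–Sjöstrand representation formula**: for all `Y, Y' ∈ L²(Ω)`,
`Cov[Y, Y'] = ∑ j E[(D_j Y) T(D_j Y')]`, where `T` is the pseudo-inverse of the
Glauber Laplacian. -/
theorem helffer_sjostrand
    (μ : ∀ i, Measure (Z i)) [∀ i, IsProbabilityMeasure (μ i)]
    (Y Y' : (∀ i, Z i) → ℝ)
    (hY : Measurable Y) (hYb : ∃ M, ∀ ω, |Y ω| ≤ M)
    (hY' : Measurable Y') (hY'b : ∃ M, ∀ ω, |Y' ω| ≤ M) :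
    (∫ ω, Y ω * Y' ω ∂(Measure.pi μ))
        - (∫ ω, Y ω ∂(Measure.pi μ)) * (∫ ω, Y' ω ∂(Measure.pi μ))
      = ∑ j, ∫ ω, glauberD μ j Y ω * glauberT μ (glauberD μ j Y') ω ∂(Measure.pi μ) := by
  classical
  obtain ⟨M, hMb⟩ := hYb
  obtain ⟨M', hM'b⟩ := hY'b
  set N := Fintype.card ι with hN
  -- the value of each summand on the right-hand side
  have hintYP : ∀ J : Finset ι,
      Integrable (fun ω => Y ω * hsP μ (Y' := Y') J ω) (Measure.pi μ) := fun J =>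
    integrable_bdd (hY.mul (hsP_measurable μ hY' J)).aestronglyMeasurable _
      (bdd_mul hMb (hsP_bound μ hM'b J))
  have key : ∀ j : ι,
      (∫ ω, glauberD μ j Y ω * glauberT μ (glauberD μ j Y') ω ∂(Measure.pi μ))
        = ∑ n ∈ Finset.Icc 1 N,
            ∑ J ∈ Finset.univ.powerset.filter (fun J : Finset ι => J.card = n),
              (n : ℝ)⁻¹ * (if j ∈ J then ∫ ω, Y ω * hsP μ (Y' := Y') J ω ∂(Measure.pi μ)
                else 0) := by
    intro j
    have hDYeq := glauberD_eq μ j hY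
    have hDY'eq := glauberD_eq μ j hY'
    have hDYm : Measurable (glauberD μ j Y) := by
      rw [hDYeq]; exact hY.sub (measurable_pE μ _ hY)
    have hDY'm : Measurable (glauberD μ j Y') := by
      rw [hDY'eq]; exact hY'.sub (measurable_pE μ _ hY')
    have hDYb : ∀ ω, |glauberD μ j Y ω| ≤ M + M := by
      intro ω; rw [hDYeq]
      refine (abs_sub _ _).trans (add_le_add (hMb ω) (pE_bound μ _ hMb ω))
    -- pointwise: pE T (D_j Y') = pE T Y' - pE (insert j T) Y'
    have hpED : ∀ T : Finset ι, ∀ ω, pE μ T (glauberD μ j Y') ω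
        = pE μ T Y' ω - pE μ (insert j T) Y' ω := by
      intro T ω
      rw [pE_congr μ T (fun ω => congrFun hDY'eq ω) ω,
        pE_sub μ T hY' hM'b (measurable_pE μ _ hY') (pE_bound μ _ hM'b) ω,
        pE_comp μ _ T hY' hM'b ω, ← Finset.insert_eq]
    -- the inner J-sum collapses
    have hsumS : ∀ J : Finset ι, ∀ ω, glauberPiJ μ J (glauberD μ j Y') ω
        = if j ∈ J then hsP μ (Y' := Y') J ω else 0 := by
      intro J ω
      unfold glauberPiJ
      have hterm : ∀ S ∈ J.powerset,
          (-1 : ℝ) ^ S.card * partialE μ (S ∪ Jᶜ) (glauberD μ j Y') ω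
            = (-1 : ℝ) ^ S.card * pE μ (S ∪ Jᶜ) Y' ω
              - (-1 : ℝ) ^ S.card * pE μ (insert j (S ∪ Jᶜ)) Y' ω := by
        intro S _
        rw [partialE_eq μ _ hDY'm ω, hpED (S ∪ Jᶜ) ω]
        ring
      rw [Finset.sum_congr rfl hterm, Finset.sum_sub_distrib]
      by_cases hj : j ∈ J
      · rw [comb_insert hj (fun U => pE μ U Y' ω)]
        simp only [hj, if_true, sub_zero]
        rfl
      · have hins : ∀ S ∈ J.powerset,
            (-1 : ℝ) ^ S.card * pE μ (insert j (S ∪ Jᶜ)) Y' ω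
              = (-1 : ℝ) ^ S.card * pE μ (S ∪ Jᶜ) Y' ω := by
          intro S _
          congr 2
          exact Finset.insert_eq_self.2 (Finset.mem_union_right S (Finset.mem_compl.2 hj))
        rw [Finset.sum_congr rfl hins]
        simp [hj]
    -- expand `glauberT` pointwise and push the product inside the sums
    have hTpt : ∀ ω, glauberD μ j Y ω * glauberT μ (glauberD μ j Y') ω
        = ∑ n ∈ Finset.Icc 1 N,
            ∑ J ∈ Finset.univ.powerset.filter (fun J : Finset ι => J.card = n),
              (n : ℝ)⁻¹ * (if j ∈ J then glauberD μ j Y ω * hsP μ (Y' := Y') J ω else 0) := by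
      intro ω
      unfold glauberT glauberPi
      rw [Finset.mul_sum]
      refine Finset.sum_congr rfl fun n _ => ?_
      rw [mul_left_comm, Finset.mul_sum, Finset.mul_sum]
      refine Finset.sum_congr rfl fun J _ => ?_
      congr 1
      rw [hsumS J ω]
      by_cases hj : j ∈ J <;> simp [hj]
    -- integrability of each summand
    have hintDP : ∀ J : Finset ι,
        Integrable (fun ω => glauberD μ j Y ω * hsP μ (Y' := Y') J ω) (Measure.pi μ) := fun J =>
      integrable_bdd (hDYm.mul (hsP_measurable μ hY' J)).aestronglyMeasurable _
        (bdd_mul hDYb (hsP_bound μ hM'b J))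
    have hintF : ∀ n : ℕ, ∀ J : Finset ι,
        Integrable (fun ω => (n : ℝ)⁻¹ *
          (if j ∈ J then glauberD μ j Y ω * hsP μ (Y' := Y') J ω else 0)) (Measure.pi μ) := by
      intro n J
      by_cases hj : j ∈ J
      · simp only [hj, if_true]
        exact (hintDP J).const_mul _
      · simp only [hj, if_false, mul_zero]
        exact integrable_const 0
    calc ∫ ω, glauberD μ j Y ω * glauberT μ (glauberD μ j Y') ω ∂(Measure.pi μ)
        = ∫ ω, (∑ n ∈ Finset.Icc 1 N,
            ∑ J ∈ Finset.univ.powerset.filter (fun J : Finset ι => J.card = n),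
              (n : ℝ)⁻¹ * (if j ∈ J then glauberD μ j Y ω * hsP μ (Y' := Y') J ω else 0))
            ∂(Measure.pi μ) := by
          exact integral_congr_ae (Filter.Eventually.of_forall hTpt)
      _ = ∑ n ∈ Finset.Icc 1 N,
            ∑ J ∈ Finset.univ.powerset.filter (fun J : Finset ι => J.card = n),
              ∫ ω, (n : ℝ)⁻¹ * (if j ∈ J then glauberD μ j Y ω * hsP μ (Y' := Y') J ω else 0)
                ∂(Measure.pi μ) := by
          rw [integral_finset_sum _ (fun n _ => integrable_finset_sum _ fun J _ => hintF n J)]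
          exact Finset.sum_congr rfl fun n _ =>
            integral_finset_sum _ (fun J _ => hintF n J)
      _ = ∑ n ∈ Finset.Icc 1 N,
            ∑ J ∈ Finset.univ.powerset.filter (fun J : Finset ι => J.card = n),
              (n : ℝ)⁻¹ * (if j ∈ J then ∫ ω, Y ω * hsP μ (Y' := Y') J ω ∂(Measure.pi μ)
                else 0) := by
          refine Finset.sum_congr rfl fun n _ => Finset.sum_congr rfl fun J _ => ?_
          rw [integral_const_mul]
          congr 1
          by_cases hj : j ∈ J
          · simp only [hj, if_true]
            -- ∫ (D_j Y) * P_J = ∫ Y * P_J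
            have h1 : (fun ω => glauberD μ j Y ω * hsP μ (Y' := Y') J ω)
                = fun ω => Y ω * hsP μ (Y' := Y') J ω
                    - pE μ ({j} : Finset ι) Y ω * hsP μ (Y' := Y') J ω := by
              funext ω; rw [hDYeq]; ring
            have hintEP : Integrable
                (fun ω => pE μ ({j} : Finset ι) Y ω * hsP μ (Y' := Y') J ω) (Measure.pi μ) :=
              integrable_bdd ((measurable_pE μ _ hY).mul
                (hsP_measurable μ hY' J)).aestronglyMeasurable _
                (bdd_mul (pE_bound μ _ hMb) (hsP_bound μ hM'b J))
            rw [h1, integral_sub (hintYP J) hintEP]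
            have h2 : ∫ ω, pE μ ({j} : Finset ι) Y ω * hsP μ (Y' := Y') J ω ∂(Measure.pi μ)
                = ∫ ω, Y ω * pE μ ({j} : Finset ι) (hsP μ (Y' := Y') J) ω ∂(Measure.pi μ) :=
              pE_selfadj μ {j} hY hMb (hsP_measurable μ hY' J) (hsP_bound μ hM'b J)
            rw [h2]
            have h3 : ∫ ω, Y ω * pE μ ({j} : Finset ι) (hsP μ (Y' := Y') J) ω ∂(Measure.pi μ)
                = 0 := by
              have : ∀ ω, Y ω * pE μ ({j} : Finset ι) (hsP μ (Y' := Y') J) ω = 0 := by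
                intro ω
                rw [pE_hsP μ hY' hM'b J hj ω, mul_zero]
              simp only [this, integral_zero]
            rw [h3, sub_zero]
          · simp [hj]
  rw [Finset.sum_congr rfl (fun j _ => key j), Finset.sum_comm]
  -- swap the `j`-sum inside and cancel `n⁻¹ * n`
  have hswap : ∀ n ∈ Finset.Icc 1 N,
      (∑ J ∈ Finset.univ.powerset.filter (fun J : Finset ι => J.card = n), ∑ j : ι,
          (n : ℝ)⁻¹ * (if j ∈ J then ∫ ω, Y ω * hsP μ (Y' := Y') J ω ∂(Measure.pi μ) else 0))
        = ∑ J ∈ Finset.univ.powerset.filter (fun J : Finset ι => J.card = n),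
            ∫ ω, Y ω * hsP μ (Y' := Y') J ω ∂(Measure.pi μ) := by
    intro n hn
    refine Finset.sum_congr rfl fun J hJ => ?_
    obtain ⟨hn1, -⟩ := Finset.mem_Icc.1 hn
    have hJcard : J.card = n := (Finset.mem_filter.1 hJ).2
    rw [← Finset.mul_sum, Finset.sum_ite_mem, Finset.univ_inter, Finset.sum_const,
      nsmul_eq_mul, hJcard, inv_mul_cancel_left₀ (Nat.cast_ne_zero.2 (by omega))]
  have hswap2 : ∀ n ∈ Finset.Icc 1 N,
      (∑ j : ι, ∑ J ∈ Finset.univ.powerset.filter (fun J : Finset ι => J.card = n),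
          (n : ℝ)⁻¹ * (if j ∈ J then ∫ ω, Y ω * hsP μ (Y' := Y') J ω ∂(Measure.pi μ) else 0))
        = ∑ J ∈ Finset.univ.powerset.filter (fun J : Finset ι => J.card = n),
            ∫ ω, Y ω * hsP μ (Y' := Y') J ω ∂(Measure.pi μ) := by
    intro n hn
    rw [Finset.sum_comm]
    exact hswap n hn
  rw [Finset.sum_congr rfl hswap2]
  -- regroup the sum over nonempty `J` as a sum over all `J` minus the `J = ∅` term
  have hmaps : ∀ J ∈ (Finset.univ : Finset ι).powerset, J.card ∈ Finset.Icc 0 N :=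
    fun J _ => Finset.mem_Icc.2 ⟨Nat.zero_le _, Finset.card_le_univ J⟩
  have hfib := Finset.sum_fiberwise_of_maps_to hmaps
    (fun J => ∫ ω, Y ω * hsP μ (Y' := Y') J ω ∂(Measure.pi μ))
  have h0N : Finset.Icc 0 N = insert 0 (Finset.Icc 1 N) := by
    ext m; simp only [Finset.mem_Icc, Finset.mem_insert]; omega
  rw [h0N, Finset.sum_insert (by simp)] at hfib
  have h00 : Finset.univ.powerset.filter (fun J : Finset ι => J.card = 0)
      = ({∅} : Finset (Finset ι)) := by
    ext J; simp [Finset.card_eq_zero]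
  rw [h00, Finset.sum_singleton] at hfib
  -- total sum equals ∫ Y Y'
  have hall : ∑ J ∈ (Finset.univ : Finset ι).powerset,
      ∫ ω, Y ω * hsP μ (Y' := Y') J ω ∂(Measure.pi μ)
        = ∫ ω, Y ω * Y' ω ∂(Measure.pi μ) := by
    rw [← integral_finset_sum _ (fun J _ => hintYP J)]
    refine integral_congr_ae (Filter.Eventually.of_forall fun ω => ?_)
    show (∑ J ∈ (Finset.univ : Finset ι).powerset, Y ω * hsP μ (Y' := Y') J ω) = Y ω * Y' ω
    rw [← Finset.mul_sum, sum_hsP μ ω]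
  -- the `J = ∅` term equals (∫ Y)(∫ Y')
  have hemp : ∫ ω, Y ω * hsP μ (Y' := Y') (∅ : Finset ι) ω ∂(Measure.pi μ)
      = (∫ ω, Y ω ∂(Measure.pi μ)) * ∫ ω, Y' ω ∂(Measure.pi μ) := by
    have h4 : ∀ ω : ∀ i, Z i, Y ω * hsP μ (Y' := Y') (∅ : Finset ι) ω
        = Y ω * ∫ ω', Y' ω' ∂(Measure.pi μ) := by
      intro ω; rw [hsP_empty μ ω]
    simp only [h4]
    rw [integral_mul_const]
  linarith [hfib]
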